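/- For every τ > 0: e^{eτ} > τ e^{1+τ} + 1, where e is Euler's number. Consequently, for every P > 1 and τ > 0 with P τ e^{1+τ} < 1, one has e^{−τ} > P ln((P² + P)/(P² + 1)); that is, the region in the (τ,P)-plane bounded by the curve Pτe^{1+τ} = 1 and the coordinate axes is contained in the region bounded by the curve e^{−τ} = P ln((P²+P)/(P²+1)) and the coordinate axes. -/

import Mathlib

open Real Filter Set

lemma cubic_le_exp {x : ℝ} (hx : 0 ≤ x) :
    1 + x + x ^ 2 / 2 + x ^ 3 / 6 ≤ Real.exp x := by
  have h := Real.sum_le_exp_of_nonneg hx 4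
  have : ∑ i ∈ Finset.range 4, x ^ i / (Nat.factorial i) =
      1 + x + x ^ 2 / 2 + x ^ 3 / 6 := by
    norm_num [Finset.sum_range_succ, Nat.factorial]
  linarith [this ▸ h]

lemma exp_neg_le {τ : ℝ} (hτ : 0 ≤ τ) : Real.exp (-τ) ≤ 1 - τ + τ ^ 2 / 2 := by
  have h := cubic_le_exp hτ
  have hpos : (0:ℝ) < Real.exp τ := Real.exp_pos τ
  rw [Real.exp_neg, inv_le_iff_one_le_mul₀ hpos]
  nlinarith [sq_nonneg τ, sq_nonneg (τ*τ), hτ]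

/-- `e^{eτ} > τ e^{1+τ} + 1` for every `τ > 0`, and consequently, for all
`P > 1` and `τ > 0` with `P τ e^{1+τ} < 1`, one has
`e^{-τ} > P ln((P² + P)/(P² + 1))`. -/
theorem stmt_19 :
    (∀ τ : ℝ, 0 < τ → τ * Real.exp (1 + τ) + 1 < Real.exp (Real.exp 1 * τ)) ∧
    (∀ P τ : ℝ, 1 < P → 0 < τ → P * τ * Real.exp (1 + τ) < 1 →
      P * Real.log ((P^2 + P) / (P^2 + 1)) < Real.exp (-τ)) := by
  constructor
  · intro τ hτ
    set a : ℝ := Real.exp 1 - 1 with ha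
    have he : (2.7182818283 : ℝ) < Real.exp 1 := Real.exp_one_gt_d9
    have ha1 : 1 < a := by rw [ha]; linarith
    clear_value a
    have haτ : 0 ≤ a * τ := by positivity
    have h1 : 1 + a * τ + (a * τ) ^ 2 / 2 ≤ Real.exp (a * τ) :=
      Real.quadratic_le_exp_of_nonneg haτ
    have h2 : Real.exp (-τ) ≤ 1 - τ + τ ^ 2 / 2 := exp_neg_le hτ.le
    have hsplit : Real.exp (Real.exp 1 * τ) = Real.exp τ * Real.exp (a * τ) := by
      rw [ha, ← Real.exp_add]; ring_nf
    have hposτ : (0:ℝ) < Real.exp τ := Real.exp_pos τ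
    have hexp1τ : Real.exp (1 + τ) = Real.exp 1 * Real.exp τ := Real.exp_add 1 τ
    have key : 1 + Real.exp 1 * τ - τ + τ ^ 2 / 2 < Real.exp (a * τ) := by
      have haa : (1:ℝ) < a * a := by nlinarith
      have : τ ^ 2 / 2 < (a * τ) ^ 2 / 2 := by nlinarith [mul_pos (show (0:ℝ) < a*a - 1 by linarith) (mul_pos hτ hτ)]
      have : 1 + a * τ + τ ^ 2 / 2 < 1 + a * τ + (a * τ) ^ 2 / 2 := by linarith
      calc 1 + Real.exp 1 * τ - τ + τ ^ 2 / 2 = 1 + a * τ + τ ^ 2 / 2 := by rw [ha]; ring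
        _ < 1 + a * τ + (a * τ) ^ 2 / 2 := this
        _ ≤ Real.exp (a * τ) := h1
    have h3 : Real.exp τ * Real.exp (-τ) = 1 := by
      rw [← Real.exp_add]; simp
    have h4 : Real.exp τ * (1 - τ + τ ^ 2 / 2) ≥ 1 := by
      calc Real.exp τ * (1 - τ + τ ^ 2 / 2) ≥ Real.exp τ * Real.exp (-τ) := by
            apply mul_le_mul_of_nonneg_left h2 hposτ.le
        _ = 1 := h3
    calc τ * Real.exp (1 + τ) + 1
        ≤ τ * Real.exp (1 + τ) + Real.exp τ * (1 - τ + τ ^ 2 / 2) := by linarith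
      _ = Real.exp τ * (1 + Real.exp 1 * τ - τ + τ ^ 2 / 2) := by rw [hexp1τ]; ring
      _ < Real.exp τ * Real.exp (a * τ) := by
          exact mul_lt_mul_of_pos_left key hposτ
      _ = Real.exp (Real.exp 1 * τ) := hsplit.symm
  · intro P τ hP hτ hcond
    have hP0 : 0 < P := by linarith
    have hden : (0:ℝ) < P^2 + 1 := by positivity
    have hx : (0:ℝ) < (P^2 + P) / (P^2 + 1) := by positivity
    have hlog : Real.log ((P^2 + P) / (P^2 + 1)) ≤ (P^2 + P) / (P^2 + 1) - 1 :=
      Real.log_le_sub_one_of_pos hx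
    have h1 : (P^2 + P) / (P^2 + 1) - 1 = (P - 1) / (P^2 + 1) := by
      field_simp
      ring
    have h2 : P * Real.log ((P^2 + P) / (P^2 + 1)) ≤ P * ((P - 1) / (P^2 + 1)) := by
      rw [← h1]; exact mul_le_mul_of_nonneg_left hlog hP0.le
    have h3 : P * ((P - 1) / (P^2 + 1)) < 1 - 1 / P := by
      have e1 : P * ((P - 1) / (P^2 + 1)) = (P^2 - P)/(P^2 + 1) := by ring
      have e2 : 1 - 1/P = (P - 1)/P := by field_simp
      rw [e1, e2, div_lt_div_iff₀ hden hP0]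
      nlinarith
    have hexp1τ : 1 < Real.exp (1 + τ) := by
      have := Real.add_one_le_exp (1 + τ); linarith
    have h4 : τ < τ * Real.exp (1 + τ) := by nlinarith
    have h5 : τ * Real.exp (1 + τ) < 1 / P := by
      rw [lt_div_iff₀ hP0]; nlinarith
    have h6 : 1 - τ ≤ Real.exp (-τ) := by
      have := Real.add_one_le_exp (-τ); linarith
    calc P * Real.log ((P^2 + P) / (P^2 + 1)) ≤ P * ((P - 1) / (P^2 + 1)) := h2
      _ < 1 - 1 / P := h3
      _ < 1 - τ * Real.exp (1 + τ) := by linarith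
      _ < 1 - τ := by linarith
      _ ≤ Real.exp (-τ) := h6
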